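/- Let C be an [n,k,d] linear code over F_q with k > 1 meeting n = 1 + ∑_{i=0}^{k-1} ⌈d/q^i⌉ (a near Griesmer code). If q divides d, then there is no [n,k,d+1] linear code over F_q, i.e., C is distance-optimal. -/

import Mathlib

open Finset

/-- Galois characterization of ceiling division on ℕ. -/
lemma cdiv_le_iff {b : ℕ} (hb : 0 < b) (a m : ℕ) : (a + b - 1) / b ≤ m ↔ a ≤ b * m := by
  rw [Nat.div_le_iff_le_mul_add_pred hb]; omega

lemma le_mul_cdiv {b : ℕ} (hb : 0 < b) (a : ℕ) : a ≤ b * ((a + b - 1) / b) :=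
  (cdiv_le_iff hb a _).1 le_rfl

lemma cdiv_mono {b : ℕ} (hb : 0 < b) {a a' : ℕ} (h : a ≤ a') :
    (a + b - 1) / b ≤ (a' + b - 1) / b := by
  rw [cdiv_le_iff hb]; exact h.trans (le_mul_cdiv hb a')

lemma cdiv_cdiv {b c : ℕ} (hb : 0 < b) (hc : 0 < c) (a : ℕ) :
    ((a + b - 1) / b + c - 1) / c = (a + b * c - 1) / (b * c) := by
  have hbc : 0 < b * c := Nat.mul_pos hb hc
  apply le_antisymm
  · rw [cdiv_le_iff hc, cdiv_le_iff hb, ← mul_assoc]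
    exact le_mul_cdiv hbc a
  · rw [cdiv_le_iff hbc, mul_assoc]
    calc a ≤ b * ((a + b - 1) / b) := le_mul_cdiv hb a
    _ ≤ b * (c * (((a + b - 1) / b + c - 1) / c)) :=
        Nat.mul_le_mul_left _ (le_mul_cdiv hc _)

/-- The weight of a restriction to the zero set of `c` as a filter card. -/
lemma hammingNorm_proj {F : Type*} [DecidableEq F] [Zero F] {ι : Type} [Fintype ι]
    [DecidableEq ι] (c x : ι → F) :
    hammingNorm (fun j : {i // c i = 0} => x j.val) =
      (Finset.univ.filter (fun i => c i = 0 ∧ x i ≠ 0)).card := by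
  rw [hammingNorm, ← Fintype.card_subtype, ← Fintype.card_subtype]
  exact Fintype.card_congr (Equiv.subtypeSubtypeEquivSubtypeInter (fun i => c i = 0) (fun i => x i ≠ 0))

/-- The key counting argument: if `c` is a minimum-weight codeword of weight `d`, then for any
codeword `x` not vanishing somewhere off the support of `c`, the residual weight of `x` is
at least `d / q`. -/
lemma residual_weight {F : Type*} [Field F] [Fintype F] [DecidableEq F]
    {ι : Type} [Fintype ι] [DecidableEq ι] {d : ℕ} (C : Submodule F (ι → F))
    (hmin : ∀ v ∈ C, v ≠ 0 → d ≤ hammingNorm v)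
    {c : ι → F} (hcC : c ∈ C) (hcd : hammingNorm c = d)
    {x : ι → F} (hxC : x ∈ C) (hx : ∃ i, c i = 0 ∧ x i ≠ 0) :
    d ≤ Fintype.card F * (Finset.univ.filter (fun i => c i = 0 ∧ x i ≠ 0)).card := by
  classical
  set A : Finset ι := Finset.univ.filter (fun i => c i ≠ 0) with hA
  set B : Finset ι := Finset.univ.filter (fun i => c i = 0 ∧ x i ≠ 0) with hB
  have hAd : A.card = d := hcd
  have key : ∀ α : F, (A.filter (fun i => x i = α * c i)).card ≤ B.card := by
    intro α
    have hz : x - α • c ∈ C := Submodule.sub_mem _ hxC (Submodule.smul_mem _ _ hcC)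
    obtain ⟨i0, hci0, hxi0⟩ := hx
    have hz0 : x - α • c ≠ 0 := by
      intro h
      apply hxi0
      have := congrFun h i0
      simpa [hci0] using this
    have hd2 : d ≤ hammingNorm (x - α • c) := hmin _ hz hz0
    have hset : Finset.univ.filter (fun i => (x - α • c) i ≠ 0) =
        B ∪ A.filter (fun i => ¬ x i = α * c i) := by
      ext i
      simp only [hB, hA, Finset.mem_filter, Finset.mem_union, Finset.mem_univ, true_and,
        Pi.sub_apply, Pi.smul_apply, smul_eq_mul, sub_ne_zero]
      by_cases h : c i = 0 <;> simp [h]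
    have hdisj : Disjoint B (A.filter (fun i => ¬ x i = α * c i)) := by
      rw [Finset.disjoint_left]
      intro i hi hi'
      simp only [hB, Finset.mem_filter, Finset.mem_univ, true_and] at hi
      simp only [hA, Finset.mem_filter, Finset.mem_univ, true_and] at hi'
      exact hi'.1 hi.1
    have hcount : hammingNorm (x - α • c) = B.card +
        (A.filter (fun i => ¬ x i = α * c i)).card := by
      rw [hammingNorm]
      rw [show ({i | (x - α • c) i ≠ 0} : Finset ι)
          = Finset.univ.filter (fun i => (x - α • c) i ≠ 0) from rfl, hset]
      exact Finset.card_union_of_disjoint hdisj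
    have hsplit := Finset.card_filter_add_card_filter_not
      (s := A) (fun i => x i = α * c i)
    omega
  have hfiber : A.card = ∑ α : F, (A.filter (fun i => x i = α * c i)).card := by
    rw [Finset.card_eq_sum_card_fiberwise
      (f := fun i => x i / c i) (t := Finset.univ) (fun i _ => Finset.mem_univ _)]
    apply Finset.sum_congr rfl
    intro α _
    congr 1
    apply Finset.filter_congr
    intro i hi
    simp only [hA, Finset.mem_filter, Finset.mem_univ, true_and] at hi
    simp [div_eq_iff hi, mul_comm]
  calc d = A.card := hAd.symm
  _ = ∑ α : F, (A.filter (fun i => x i = α * c i)).card := hfiber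
  _ ≤ ∑ _α : F, B.card := Finset.sum_le_sum (fun α _ => key α)
  _ = Fintype.card F * B.card := by simp [Finset.sum_const, mul_comm]

set_option maxHeartbeats 1000000 in
set_option synthInstance.maxHeartbeats 400000 in
/-- The Griesmer bound. -/
theorem griesmer_bound (F : Type*) [Field F] [Fintype F] [DecidableEq F] :
    ∀ (k : ℕ) (ι : Type) [Fintype ι] [DecidableEq ι] (d : ℕ) (C : Submodule F (ι → F)),
      Module.finrank F C = k →
      (∀ v ∈ C, v ≠ 0 → d ≤ hammingNorm v) →
      (∃ v ∈ C, v ≠ 0 ∧ hammingNorm v = d) →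
      ∑ i ∈ Finset.range k, (d + Fintype.card F ^ i - 1) / Fintype.card F ^ i ≤
        Fintype.card ι := by
  intro k
  induction k with
  | zero => intro ι _ _ d C _ _ _; simp
  | succ k ih =>
    intro ι _ _ d C hk hmin hex
    obtain ⟨c, hcC, hc0, hcd⟩ := hex
    set q := Fintype.card F with hqdef
    have hq1 : 1 < q := Fintype.one_lt_card
    have hq0 : 0 < q := by omega
    have hdn : d ≤ Fintype.card ι := hcd ▸ hammingNorm_le_card_fintype
    have hdpos : 0 < d := hcd ▸ hammingNorm_pos_iff.2 hc0
    rw [Finset.sum_range_succ']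
    have hf0 : (d + q ^ 0 - 1) / q ^ 0 = d := by simp
    rw [hf0]
    -- the residual code
    set π : (ι → F) →ₗ[F] ({i // c i = 0} → F) := LinearMap.funLeft F F Subtype.val with hπ
    have hπapp : ∀ (v : ι → F) (j : {i // c i = 0}), π v j = v j.val := fun v j => rfl
    have hcard' : Fintype.card {i // c i = 0} = Fintype.card ι - d := by
      rw [Fintype.card_subtype]
      have h2 := Finset.card_filter_add_card_filter_not
        (s := (Finset.univ : Finset ι)) (fun i => c i = 0)
      have hAc : (Finset.univ.filter (fun i : ι => ¬ c i = 0)).card = d := hcd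
      have h3 : (Finset.univ : Finset ι).card = Fintype.card ι := Finset.card_univ
      omega
    -- dimension of the kernel of the projection restricted to C
    have hkerrank : Module.finrank F (LinearMap.ker (π.comp C.subtype)) = 1 := by
      have hcker : π c = 0 := by
        funext j; rw [hπapp]; exact j.2
      have hc' : (⟨c, hcC⟩ : C) ≠ 0 := by
        intro h
        exact hc0 (by simpa [Subtype.ext_iff] using h)
      have hker : LinearMap.ker (π.comp C.subtype) = Submodule.span F {(⟨c, hcC⟩ : C)} := by
        apply le_antisymm
        · rintro ⟨x, hxC⟩ hxker
          simp only [LinearMap.mem_ker, LinearMap.comp_apply, Submodule.subtype_apply] at hxker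
          have hxz : ∀ i : ι, c i = 0 → x i = 0 := by
            intro i hi
            have := congrFun hxker ⟨i, hi⟩
            simpa [hπapp] using this
          obtain ⟨i0, hi0⟩ : ∃ i, c i ≠ 0 := by
            by_contra h
            push_neg at h
            exact hc0 (funext h)
          have hz : x - (x i0 / c i0) • c = 0 := by
            by_contra hz0
            have hzC : x - (x i0 / c i0) • c ∈ C :=
              Submodule.sub_mem _ hxC (Submodule.smul_mem _ _ hcC)
            have hd2 : d ≤ hammingNorm (x - (x i0 / c i0) • c) := hmin _ hzC hz0
            have hmem0 : i0 ∈ ({i | c i ≠ 0} : Finset ι) := by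
              simp only [Finset.mem_filter, Finset.mem_univ, true_and]
              exact hi0
            have hsub : ({i | (x - (x i0 / c i0) • c) i ≠ 0} : Finset ι) ⊆
                ({i | c i ≠ 0} : Finset ι).erase i0 := by
              intro i hi
              simp only [Finset.mem_filter, Finset.mem_univ, true_and, Pi.sub_apply,
                Pi.smul_apply, smul_eq_mul, sub_ne_zero] at hi
              rw [Finset.mem_erase]
              constructor
              · rintro rfl
                exact hi (div_mul_cancel₀ _ hi0).symm
              · simp only [Finset.mem_filter, Finset.mem_univ, true_and]
                intro hci
                exact hi (by simp [hci, hxz i hci])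
            have hlt : hammingNorm (x - (x i0 / c i0) • c) ≤ d - 1 := by
              calc hammingNorm (x - (x i0 / c i0) • c)
                  ≤ (({i | c i ≠ 0} : Finset ι).erase i0).card := Finset.card_le_card hsub
              _ = ({i | c i ≠ 0} : Finset ι).card - 1 := Finset.card_erase_of_mem hmem0
              _ = d - 1 := by
                  rw [show #(Finset.filter (fun i => c i ≠ 0) Finset.univ)
                    = hammingNorm c from rfl, hcd]
            omega
          rw [Submodule.mem_span_singleton]
          refine ⟨x i0 / c i0, Subtype.ext ?_⟩
          simpa using (sub_eq_zero.1 hz).symm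
        · rw [Submodule.span_le, Set.singleton_subset_iff]
          simp only [SetLike.mem_coe, LinearMap.mem_ker, LinearMap.comp_apply,
            Submodule.subtype_apply]
          exact hcker
      rw [hker]
      exact finrank_span_singleton hc'
    -- dimension of the residual code
    have hrange : LinearMap.range (π.comp C.subtype) = C.map π := by
      rw [LinearMap.range_comp, Submodule.range_subtype]
    have hDrank : Module.finrank F (C.map π) = k := by
      have := LinearMap.finrank_range_add_finrank_ker (π.comp C.subtype)
      rw [hrange, hkerrank, hk] at this
      omega
    rcases Nat.eq_zero_or_pos k with hk0 | hkpos
    · subst hk0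
      simpa using hdn
    -- there is a nonzero element in the residual code
    have : Nontrivial (C.map π) := by
      apply Module.nontrivial_of_finrank_pos (R := F)
      rw [hDrank]; exact hkpos
    obtain ⟨y0, hy00⟩ := exists_ne (0 : C.map π)
    have hy0D : (y0 : {i // c i = 0} → F) ∈ C.map π := y0.2
    have hy0ne : (y0 : {i // c i = 0} → F) ≠ 0 := fun h => hy00 (Subtype.ext h)
    -- the minimum weight of the residual code
    set N : Set ℕ := {m | ∃ y ∈ C.map π, y ≠ 0 ∧ hammingNorm y = m} with hN
    have hNne : N.Nonempty := ⟨_, ⟨y0, hy0D, hy0ne, rfl⟩⟩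
    obtain ⟨y1, hy1D, hy10, hy1w⟩ := Nat.sInf_mem hNne
    set d1 := sInf N with hd1
    have hminD : ∀ y ∈ C.map π, y ≠ 0 → d1 ≤ hammingNorm y :=
      fun y hy hy0' => Nat.sInf_le ⟨y, hy, hy0', rfl⟩
    -- lower bound on d1
    have hd1lb : (d + q - 1) / q ≤ d1 := by
      obtain ⟨x, hxC, hπx⟩ := Submodule.mem_map.1 hy1D
      have hxfun : ∀ j : {i // c i = 0}, y1 j = x j.val := fun j => by
        rw [← hπx]; rfl
      obtain ⟨j, hj⟩ : ∃ j, y1 j ≠ 0 := by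
        by_contra h
        push_neg at h
        exact hy10 (funext h)
      have hx : ∃ i, c i = 0 ∧ x i ≠ 0 := ⟨j.val, j.2, by rw [← hxfun]; exact hj⟩
      have := residual_weight C hmin hcC hcd hxC hx
      rw [cdiv_le_iff hq0]
      calc d ≤ q * (Finset.univ.filter (fun i => c i = 0 ∧ x i ≠ 0)).card := this
      _ = q * hammingNorm y1 := by
          rw [← hammingNorm_proj c x]
          congr 1
          exact congrArg _ (funext fun j => (hxfun j).symm)
      _ = q * d1 := by rw [hy1w]
    -- apply the inductive hypothesis
    have hih := ih {i // c i = 0} d1 (C.map π) hDrank hminD ⟨y1, hy1D, hy10, hy1w⟩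
    rw [hcard'] at hih
    have hstep : ∑ i ∈ Finset.range k, (d + q ^ (i + 1) - 1) / q ^ (i + 1) ≤
        Fintype.card ι - d := by
      refine le_trans (Finset.sum_le_sum fun i _ => ?_) hih
      have hqi : 0 < q ^ i := Nat.pow_pos hq0
      calc (d + q ^ (i + 1) - 1) / q ^ (i + 1)
          = ((d + q - 1) / q + q ^ i - 1) / q ^ i := by
            rw [cdiv_cdiv hq0 hqi, ← pow_succ']
      _ ≤ (d1 + q ^ i - 1) / q ^ i := cdiv_mono hqi hd1lb
    omega

/-- A near Griesmer code with `q ∣ d` is distance-optimal: no code of the same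
length and dimension has a larger minimum distance. -/
theorem stmt_2 (q n k d : ℕ) (F : Type*) [Field F] [Fintype F] [DecidableEq F]
    (hq : Fintype.card F = q)
    (C : Submodule F (Fin n → F))
    (hk : Module.finrank F C = k) (hk1 : 1 < k)
    (hmin : ∀ c ∈ C, c ≠ 0 → d ≤ hammingNorm c)
    (hex : ∃ c ∈ C, c ≠ 0 ∧ hammingNorm c = d)
    (hn : n = 1 + ∑ i ∈ Finset.range k, (d + q ^ i - 1) / q ^ i)
    (hd : q ∣ d) :
    ¬ ∃ (C' : Submodule F (Fin n → F)) (d' : ℕ), d < d' ∧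
      Module.finrank F C' = k ∧
      (∀ c ∈ C', c ≠ 0 → d' ≤ hammingNorm c) ∧
      (∃ c ∈ C', c ≠ 0 ∧ hammingNorm c = d') := by
  subst hq
  rintro ⟨C', d', hdd', hk', hmin', hex'⟩
  set q := Fintype.card F with hqdef
  have hq1 : 1 < q := Fintype.one_lt_card
  have hq0 : 0 < q := by omega
  have hG := griesmer_bound F k (Fin n) d' C' hk' hmin' hex'
  rw [Fintype.card_fin] at hG
  obtain ⟨k', rfl⟩ : ∃ k', k = k' + 2 := ⟨k - 2, by omega⟩
  obtain ⟨m, hm⟩ := hd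
  set f : ℕ → ℕ := fun i => (d + q ^ i - 1) / q ^ i with hf
  set g : ℕ → ℕ := fun i => (d' + q ^ i - 1) / q ^ i with hg
  have hsplitf : ∑ i ∈ Finset.range (k' + 2), f i
      = (∑ i ∈ Finset.range k', f (i + 2) + f 1) + f 0 := by
    rw [Finset.sum_range_succ', Finset.sum_range_succ']
  have hsplitg : ∑ i ∈ Finset.range (k' + 2), g i
      = (∑ i ∈ Finset.range k', g (i + 2) + g 1) + g 0 := by
    rw [Finset.sum_range_succ', Finset.sum_range_succ']
  have htail : ∑ i ∈ Finset.range k', f (i + 2) ≤ ∑ i ∈ Finset.range k', g (i + 2) :=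
    Finset.sum_le_sum fun i _ => cdiv_mono (Nat.pow_pos hq0) hdd'.le
  have hf0 : f 0 = d := by simp [hf]
  have hg0 : g 0 = d' := by simp [hg]
  have hf1 : f 1 = m := by
    simp only [hf, pow_one, hm]
    rw [show q * m + q - 1 = q - 1 + q * m by omega, Nat.add_mul_div_left _ _ hq0,
      Nat.div_eq_of_lt (by omega)]
    omega
  have hg1 : m + 1 ≤ g 1 := by
    have h1 : ((d + 1) + q ^ 1 - 1) / q ^ 1 ≤ g 1 := cdiv_mono (by simpa using hq0) hdd'
    have h2 : ((d + 1) + q ^ 1 - 1) / q ^ 1 = m + 1 := by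
      rw [pow_one, hm, show q * m + 1 + q - 1 = q * (m + 1) by rw [mul_add, mul_one]; omega,
        Nat.mul_div_cancel_left _ hq0]
    omega
  rw [hsplitg] at hG
  rw [hsplitf] at hn
  omega
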